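/- Let θ(x) = ∑_{p prime, p ≤ x} log p, p_n the n-th prime, and g_n = p_{n+1} − p_n. Let a > 0, b ≥ 0, c > 0, x₀ ≥ 2, and suppose |θ(x) − x| < a x (log x)^b exp(−c √(log x)) for all x ≥ x₀. Set x⋆ = max(x₀, exp((2b/c)²)). If moreover a (log x)^b exp(−c √(log x)) < 1 for all x ≥ x⋆, then for every n with p_n ≥ x⋆ one has g_n / p_n < 2 a (log p_n)^b exp(−c √(log p_n)) / (1 − a (log p_n)^b exp(−c √(log p_n))). -/

import Mathlib

set_option maxHeartbeats 1000000

/-- The first Chebyshev function `θ(x) = ∑_{p prime, p ≤ x} log p`. -/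
noncomputable def chebyshevθ (x : ℝ) : ℝ :=
  ∑ p ∈ Finset.filter Nat.Prime (Finset.range (⌊x⌋₊ + 1)), Real.log p

/-- The `n`-th prime number, indexed so that `nthPrime 1 = 2`. -/
noncomputable def nthPrime (n : ℕ) : ℕ := Nat.nth Nat.Prime (n - 1)

/-- The `n`-th prime gap `gₙ = p_{n+1} - pₙ` (as a real number). -/
noncomputable def primeGap (n : ℕ) : ℝ := (nthPrime (n + 1) : ℝ) - (nthPrime n : ℝ)

lemma aux_core (b c s t : ℝ) (hb : 0 ≤ b) (hs : 0 < s) (hst : s ≤ t) (hbc : 2 * b ≤ c * s) :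
    t ^ (2 * b) * Real.exp (-c * t) ≤ s ^ (2 * b) * Real.exp (-c * s) := by
  have ht : 0 < t := lt_of_lt_of_le hs hst
  rw [Real.rpow_def_of_pos hs, Real.rpow_def_of_pos ht, ← Real.exp_add, ← Real.exp_add]
  apply Real.exp_le_exp.2
  have hlog : Real.log (t / s) ≤ t / s - 1 := Real.log_le_sub_one_of_pos (by positivity)
  rw [Real.log_div (ne_of_gt ht) (ne_of_gt hs)] at hlog
  have h1 : (2 * b) * (Real.log t - Real.log s) ≤ (2 * b) * (t / s - 1) :=
    mul_le_mul_of_nonneg_left hlog (by linarith)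
  have h2 : (2 * b) * (t / s - 1) ≤ c * (t - s) := by
    have hss : s * (t / s - 1) = t - s := by field_simp
    nlinarith [mul_le_mul_of_nonneg_right hbc (show (0:ℝ) ≤ t / s - 1 by
      rw [le_sub_iff_add_le, le_div_iff₀ hs]; linarith)]
  nlinarith

/-- antitonicity of ε on [x⋆, ∞) -/
lemma aux_eps_anti (a b c x y : ℝ) (ha : 0 < a) (hb : 0 ≤ b) (hc : 0 < c)
    (hx2 : 2 ≤ x) (hxstar : Real.exp ((2 * b / c) ^ 2) ≤ x) (hxy : x ≤ y) :
    a * Real.log y ^ b * Real.exp (-c * Real.sqrt (Real.log y)) ≤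
      a * Real.log x ^ b * Real.exp (-c * Real.sqrt (Real.log x)) := by
  have hx0 : (0:ℝ) < x := by linarith
  have hlx : 0 < Real.log x := Real.log_pos (by linarith)
  have hly : 0 < Real.log y := lt_of_lt_of_le hlx (Real.log_le_log hx0 hxy)
  set s := Real.sqrt (Real.log x) with hsdef
  set t := Real.sqrt (Real.log y) with htdef
  have hs : 0 < s := Real.sqrt_pos.2 hlx
  have hst : s ≤ t := Real.sqrt_le_sqrt (Real.log_le_log hx0 hxy)
  have hbc : 2 * b ≤ c * s := by
    have h1 : (2 * b / c) ^ 2 ≤ Real.log x := by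
      rw [← Real.log_exp ((2 * b / c) ^ 2)]
      exact Real.log_le_log (Real.exp_pos _) hxstar
    have h2 : 2 * b / c ≤ s := by
      refine le_trans ?_ (Real.sqrt_le_sqrt h1)
      rw [Real.sqrt_sq_eq_abs]
      exact le_abs_self _
    rw [div_le_iff₀ hc] at h2; linarith [h2]
  have hxx : Real.log x ^ b = s ^ (2 * b) := by
    rw [show Real.log x = s ^ 2 from (Real.sq_sqrt hlx.le).symm,
      ← Real.rpow_natCast s 2, ← Real.rpow_mul hs.le]
    norm_num
  have hyy : Real.log y ^ b = t ^ (2 * b) := by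
    rw [show Real.log y = t ^ 2 from (Real.sq_sqrt hly.le).symm,
      ← Real.rpow_natCast t 2, ← Real.rpow_mul (Real.sqrt_nonneg _)]
    norm_num
    rfl
  rw [hxx, hyy, mul_assoc, mul_assoc]
  exact mul_le_mul_of_nonneg_left (aux_core b c s t hb hs hst hbc) ha.le

lemma aux_between (n m : ℕ) (hn : 1 ≤ n) (hm : Nat.Prime m)
    (hlt : m < Nat.nth Nat.Prime n) : m ≤ Nat.nth Nat.Prime (n - 1) := by
  have inf : (setOf Nat.Prime).Infinite := Nat.infinite_setOf_prime
  have hm' : Nat.nth Nat.Prime (Nat.count Nat.Prime m) = m := Nat.nth_count hm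
  have hcount : Nat.count Nat.Prime m < n := by
    rw [← hm'] at hlt
    exact (Nat.nth_lt_nth inf).1 hlt
  calc m = Nat.nth Nat.Prime (Nat.count Nat.Prime m) := hm'.symm
    _ ≤ Nat.nth Nat.Prime (n - 1) := (Nat.nth_le_nth inf).2 (by omega)

lemma aux_cont (a b c q : ℝ) (hb : 0 ≤ b) (hq : q ≠ 0) :
    ContinuousAt (fun x : ℝ =>
      x * (a * Real.log x ^ b * Real.exp (-c * Real.sqrt (Real.log x)))) q := by
  have h1 : ContinuousAt (fun x : ℝ => Real.log x ^ b) q :=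
    (Real.continuousAt_log hq).rpow_const (Or.inr hb)
  fun_prop (disch := assumption)

theorem lemma_part_i (a b c x₀ : ℝ) (ha : 0 < a) (hb : 0 ≤ b) (hc : 0 < c) (hx₀ : 2 ≤ x₀)
    (hθ : ∀ x : ℝ, x₀ ≤ x →
      |chebyshevθ x - x| < a * x * Real.log x ^ b * Real.exp (-c * Real.sqrt (Real.log x)))
    (hsmall : ∀ x : ℝ, max x₀ (Real.exp ((2 * b / c) ^ 2)) ≤ x →
      a * Real.log x ^ b * Real.exp (-c * Real.sqrt (Real.log x)) < 1) :
    ∀ n : ℕ, 1 ≤ n → max x₀ (Real.exp ((2 * b / c) ^ 2)) ≤ (nthPrime n : ℝ) →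
      primeGap n / (nthPrime n : ℝ) <
        2 * (a * Real.log (nthPrime n) ^ b *
              Real.exp (-c * Real.sqrt (Real.log (nthPrime n)))) /
          (1 - a * Real.log (nthPrime n) ^ b *
              Real.exp (-c * Real.sqrt (Real.log (nthPrime n)))) := by
  intro n hn hP
  have inf : (setOf Nat.Prime).Infinite := Nat.infinite_setOf_prime
  set P : ℕ := nthPrime n with hPdef
  set Q : ℕ := nthPrime (n + 1) with hQdef
  have hQnth : Q = Nat.nth Nat.Prime n := by rw [hQdef]; unfold nthPrime; congr 1
  have hPQ : P < Q := by
    rw [hQnth, hPdef]; unfold nthPrime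
    exact (Nat.nth_lt_nth inf).2 (by omega)
  have hPprime : Nat.Prime P := Nat.nth_mem_of_infinite inf _
  have hP2 : 2 ≤ P := hPprime.two_le
  have hP2' : (2:ℝ) ≤ P := by exact_mod_cast hP2
  have hPx₀ : x₀ ≤ (P:ℝ) := le_trans (le_max_left _ _) hP
  have hPstar : Real.exp ((2 * b / c) ^ 2) ≤ (P:ℝ) := le_trans (le_max_right _ _) hP
  have hPQ' : (P:ℝ) < Q := by exact_mod_cast hPQ
  -- ε shorthand
  set ε : ℝ → ℝ := fun x => a * Real.log x ^ b * Real.exp (-c * Real.sqrt (Real.log x))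
    with hεdef
  -- θ constant on [P, Q)
  have hθeq : ∀ x : ℝ, (P:ℝ) ≤ x → x < Q → chebyshevθ x = chebyshevθ P := by
    intro x hx1 hx2
    have hx0 : (0:ℝ) ≤ x := le_trans (by positivity) hx1
    unfold chebyshevθ
    congr 1
    ext m
    simp only [Finset.mem_filter, Finset.mem_range, Nat.lt_succ_iff, Nat.floor_natCast]
    constructor
    · rintro ⟨hmle, hmp⟩
      refine ⟨?_, hmp⟩
      have hmx : (m:ℝ) ≤ x := (Nat.le_floor_iff hx0).1 hmle
      have hmQ : m < Q := by exact_mod_cast lt_of_le_of_lt hmx hx2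
      rw [hQnth] at hmQ
      exact aux_between n m hn hmp hmQ
    · rintro ⟨hmle, hmp⟩
      refine ⟨Nat.le_floor ?_, hmp⟩
      exact le_trans (by exact_mod_cast hmle) hx1
  set θp : ℝ := chebyshevθ (P:ℝ) with hθpdef
  -- limit: Q - θp ≤ Q * ε Q
  have hQpos : (0:ℝ) < Q := lt_trans (by linarith) hPQ'
  have h1 : (Q:ℝ) - θp ≤ (Q:ℝ) * ε (Q:ℝ) := by
    have hQ0 : (Q:ℝ) ≠ 0 := ne_of_gt hQpos
    have hcont : ContinuousAt (fun x : ℝ => x * ε x) (Q:ℝ) := by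
      rw [hεdef]; exact aux_cont a b c (Q:ℝ) hb hQ0
    have hten1 : Filter.Tendsto (fun x : ℝ => x - θp) (nhdsWithin (Q:ℝ) (Set.Iio (Q:ℝ)))
        (nhds ((Q:ℝ) - θp)) :=
      ((continuous_id.sub continuous_const).tendsto _).mono_left nhdsWithin_le_nhds
    have hten2 : Filter.Tendsto (fun x : ℝ => x * ε x) (nhdsWithin (Q:ℝ) (Set.Iio (Q:ℝ)))
        (nhds ((Q:ℝ) * ε (Q:ℝ))) := hcont.continuousWithinAt
    refine le_of_tendsto_of_tendsto hten1 hten2 ?_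
    have hmem : Set.Ioo (P:ℝ) (Q:ℝ) ∈ nhdsWithin (Q:ℝ) (Set.Iio (Q:ℝ)) :=
      Ioo_mem_nhdsLT_of_mem ⟨hPQ', le_rfl⟩
    filter_upwards [hmem] with x hx
    have hx₀x : x₀ ≤ x := le_trans hPx₀ hx.1.le
    have hbound := hθ x hx₀x
    have heq := hθeq x hx.1.le hx.2
    rw [heq] at hbound
    have : x - θp ≤ |θp - x| := by rw [abs_sub_comm]; exact le_abs_self _
    have hfin : x - θp < x * ε x := by
      calc x - θp ≤ |θp - x| := this
        _ < a * x * Real.log x ^ b * Real.exp (-c * Real.sqrt (Real.log x)) := hbound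
        _ = x * ε x := by rw [hεdef]; ring
    exact hfin.le
  -- θp - P < P * ε P
  have h2 : θp - (P:ℝ) < (P:ℝ) * ε (P:ℝ) := by
    have hbound := hθ (P:ℝ) hPx₀
    calc θp - (P:ℝ) ≤ |θp - (P:ℝ)| := le_abs_self _
      _ < a * (P:ℝ) * Real.log (P:ℝ) ^ b * Real.exp (-c * Real.sqrt (Real.log (P:ℝ))) :=
        hbound
      _ = (P:ℝ) * ε (P:ℝ) := by rw [hεdef]; ring
  have h3 : ε (Q:ℝ) ≤ ε (P:ℝ) :=
    aux_eps_anti a b c (P:ℝ) (Q:ℝ) ha hb hc hP2' hPstar hPQ'.le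
  have h4 : ε (P:ℝ) < 1 := hsmall (P:ℝ) hP
  have hgap : primeGap n = (Q:ℝ) - (P:ℝ) := rfl
  have hkey : (Q:ℝ) - (P:ℝ) < ((Q:ℝ) + (P:ℝ)) * ε (P:ℝ) := by
    have hQe : (Q:ℝ) * ε (Q:ℝ) ≤ (Q:ℝ) * ε (P:ℝ) :=
      mul_le_mul_of_nonneg_left h3 hQpos.le
    nlinarith
  have hεP : a * Real.log (P:ℝ) ^ b * Real.exp (-c * Real.sqrt (Real.log (P:ℝ)))
      = ε (P:ℝ) := rfl
  rw [hgap, hεP, div_lt_div_iff₀ (by linarith) (by linarith)]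
  nlinarith
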